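/- One has max(1, limsup_{n→∞} ‖G_n‖^{1/n}) = max(1, max_{0 ≤ j ≤ μ−1} |θ_j|^{1/(μ−j)}). (In other words, the Poincaré–Katz rank of a differential module is computed from the coefficients of the differential equation satisfied by a cyclic vector.) -/

import Mathlib

section Aux
variable {F : Type*} [NormedField F]
variable {μ : ℕ} (hμ : 1 ≤ μ) (θ : Fin μ → F) (G1 : Matrix (Fin μ) (Fin μ) F)
variable (hG1 : ∀ i j : Fin μ, G1 i j =
      if (j : ℕ) = μ - 1 then θ i else if (i : ℕ) = (j : ℕ) + 1 then 1 else 0)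

include hμ hG1 in
/-- entry formula for G1 * M -/
lemma mulG1_apply (M : Matrix (Fin μ) (Fin μ) F) (i j : Fin μ) :
    (G1 * M) i j = (if h : (i : ℕ) = 0 then 0 else M ⟨(i : ℕ) - 1, by omega⟩ j)
      + θ i * M ⟨μ - 1, by omega⟩ j := by
  rw [Matrix.mul_apply]
  have key : ∀ k : Fin μ, G1 i k * M k j =
      (if k = (⟨μ - 1, by omega⟩ : Fin μ) then θ i * M ⟨μ - 1, by omega⟩ j else 0)
      + (if (¬ (k : ℕ) = μ - 1) ∧ (i : ℕ) = (k : ℕ) + 1 then M k j else 0) := by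
    intro k
    rw [hG1]
    by_cases h1 : (k : ℕ) = μ - 1
    · have : k = (⟨μ - 1, by omega⟩ : Fin μ) := by
        apply Fin.ext; exact h1
      rw [this] at h1 ⊢
      simp [h1]
    · have hk : ¬ (k = (⟨μ - 1, by omega⟩ : Fin μ)) := by
        intro hc; apply h1; rw [hc]
      by_cases h2 : (i : ℕ) = (k : ℕ) + 1
      · simp [h1, h2, hk]
      · simp [h1, h2, hk]
  rw [Finset.sum_congr rfl (fun k _ => key k)]
  rw [Finset.sum_add_distrib]
  rw [Finset.sum_ite_eq' Finset.univ (⟨μ - 1, by omega⟩ : Fin μ)]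
  simp only [Finset.mem_univ, if_true]
  rw [add_comm]
  congr 1
  by_cases hi : (i : ℕ) = 0
  · rw [dif_pos hi]
    apply Finset.sum_eq_zero
    intro k _
    rw [if_neg]
    rintro ⟨-, h2⟩
    omega
  · rw [dif_neg hi]
    rw [Finset.sum_eq_single (⟨(i : ℕ) - 1, by omega⟩ : Fin μ)]
    · rw [if_pos]
      constructor
      · simp only []
        omega
      · simp only []
        omega
    · intro k _ hk
      rw [if_neg]
      rintro ⟨h1, h2⟩
      apply hk
      apply Fin.ext
      simp only []
      omega
    · intro h; exact absurd (Finset.mem_univ _) h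

include hμ hG1 in
lemma pow_apply_low : ∀ n, n < μ → ∀ i : Fin μ,
    (G1 ^ n) i ⟨0, by omega⟩ = if (i : ℕ) = n then 1 else 0 := by
  intro n
  induction n with
  | zero =>
    intro _ i
    rw [pow_zero, Matrix.one_apply]
    congr 1
    simp [Fin.ext_iff, eq_comm]
  | succ n ih =>
    intro hn i
    rw [pow_succ', mulG1_apply hμ θ G1 hG1]
    rw [ih (by omega) ⟨μ - 1, by omega⟩]
    have h2 : ¬ (μ - 1 = n) := by omega
    rw [if_neg h2, mul_zero, add_zero]
    by_cases hi : (i : ℕ) = 0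
    · rw [dif_pos hi, if_neg (by omega)]
    · rw [dif_neg hi, ih (by omega) ⟨(i : ℕ) - 1, by omega⟩]
      simp only []
      by_cases h3 : (i : ℕ) = n + 1
      · rw [if_pos (by omega), if_pos h3]
      · rw [if_neg (by omega), if_neg h3]

include hμ hG1 in
lemma mulG1_apply_zero (M : Matrix (Fin μ) (Fin μ) F) (j : Fin μ) :
    (G1 * M) ⟨0, by omega⟩ j = θ ⟨0, by omega⟩ * M ⟨μ - 1, by omega⟩ j := by
  rw [mulG1_apply hμ θ G1 hG1, dif_pos rfl, zero_add]

include hμ hG1 in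
lemma mulG1_apply_succ (M : Matrix (Fin μ) (Fin μ) F) (u : ℕ) (hu : u + 1 < μ) (j : Fin μ) :
    (G1 * M) ⟨u + 1, hu⟩ j
      = M ⟨u, by omega⟩ j + θ ⟨u + 1, hu⟩ * M ⟨μ - 1, by omega⟩ j := by
  rw [mulG1_apply hμ θ G1 hG1, dif_neg (by simp)]
  rfl

include hμ hG1 in
lemma climb : ∀ u (hu : u ≤ μ - 1) (m : ℕ),
    (G1 ^ (m + 1 + u)) ⟨u, by omega⟩ ⟨0, by omega⟩
      = ∑ t ∈ Finset.range (u + 1),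
          (if h : t < μ then θ ⟨t, h⟩ else 0) *
            (G1 ^ (m + t)) ⟨μ - 1, by omega⟩ ⟨0, by omega⟩ := by
  intro u
  induction u with
  | zero =>
    intro _ m
    rw [Finset.sum_range_one, pow_succ', mulG1_apply_zero hμ θ G1 hG1,
      dif_pos (show (0:ℕ) < μ by omega)]
    rfl
  | succ u ih =>
    intro hu m
    have e1 : m + 1 + (u + 1) = (m + 1 + u) + 1 := by omega
    rw [e1, pow_succ', mulG1_apply_succ hμ θ G1 hG1 _ u (by omega),
      Finset.sum_range_succ, ih (by omega) m, dif_pos (show u + 1 < μ by omega)]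
    have e4 : m + 1 + u = m + (u + 1) := by omega
    rw [e4]

include hμ hG1 in
lemma recurD (m : ℕ) :
    (G1 ^ (m + μ)) ⟨μ - 1, by omega⟩ ⟨0, by omega⟩
      = ∑ t ∈ Finset.range μ,
          (if h : t < μ then θ ⟨t, h⟩ else 0) *
            (G1 ^ (m + t)) ⟨μ - 1, by omega⟩ ⟨0, by omega⟩ := by
  have := climb hμ θ G1 hG1 (μ - 1) le_rfl m
  have e1 : m + 1 + (μ - 1) = m + μ := by omega
  have e2 : μ - 1 + 1 = μ := by omega
  rw [e1, e2] at this
  exact this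

include hμ hG1 in
lemma pividentity (N : ℕ) :
    ∑ k ∈ Finset.range (μ + 1),
      ((if k = 0 then (1 : F) else -(if h : μ - k < μ then θ ⟨μ - k, h⟩ else 0)) *
        (if k ≤ N then (G1 ^ (N - k)) ⟨μ - 1, by omega⟩ ⟨0, by omega⟩ else 0))
      = if N = μ - 1 then (1 : F) else 0 := by
  rw [Finset.sum_range_succ']
  simp only [if_pos rfl, Nat.zero_le, if_true, Nat.sub_zero, one_mul]
  by_cases hN : μ ≤ N
  · rw [if_neg (by omega : ¬ N = μ - 1)]
    have hterm : ∀ k ∈ Finset.range μ,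
        ((if k + 1 = 0 then (1 : F) else -(if h : μ - (k+1) < μ then θ ⟨μ - (k+1), h⟩ else 0)) *
          (if k + 1 ≤ N then (G1 ^ (N - (k+1))) ⟨μ - 1, by omega⟩ ⟨0, by omega⟩ else 0))
        = -((fun t => (if h : t < μ then θ ⟨t, h⟩ else 0) *
              (G1 ^ ((N - μ) + t)) ⟨μ - 1, by omega⟩ ⟨0, by omega⟩) (μ - 1 - k)) := by
      intro k hk
      rw [Finset.mem_range] at hk
      rw [if_neg (by omega), if_pos (by omega : k + 1 ≤ N)]
      simp only []
      have e1 : μ - (k + 1) = μ - 1 - k := by omega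
      have e2 : N - (k + 1) = (N - μ) + (μ - 1 - k) := by omega
      rw [e1, e2, neg_mul]
    rw [Finset.sum_congr rfl hterm]
    rw [Finset.sum_neg_distrib]
    rw [Finset.sum_range_reflect (fun t => (if h : t < μ then θ ⟨t, h⟩ else 0) *
      (G1 ^ (N - μ + t)) ⟨μ - 1, by omega⟩ ⟨0, by omega⟩) μ]
    rw [← recurD hμ θ G1 hG1 (N - μ)]
    have e3 : N - μ + μ = N := by omega
    rw [e3, neg_add_cancel]
  · have hN' : N < μ := by omega
    rw [pow_apply_low hμ θ G1 hG1 N hN']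
    have hterm : ∀ k ∈ Finset.range μ,
        ((if k + 1 = 0 then (1 : F) else -(if h : μ - (k+1) < μ then θ ⟨μ - (k+1), h⟩ else 0)) *
          (if k + 1 ≤ N then (G1 ^ (N - (k+1))) ⟨μ - 1, by omega⟩ ⟨0, by omega⟩ else 0))
        = 0 := by
      intro k hk
      rw [Finset.mem_range] at hk
      by_cases h2 : k + 1 ≤ N
      · rw [if_pos h2, pow_apply_low hμ θ G1 hG1 _ (by omega),
          if_neg (show ¬ ((⟨μ - 1, by omega⟩ : Fin μ) : ℕ) = N - (k + 1) by
            show ¬ (μ - 1 = N - (k + 1)); omega), mul_zero]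
      · rw [if_neg h2, mul_zero]
    rw [Finset.sum_congr rfl hterm, Finset.sum_const_zero, zero_add]
    by_cases h3 : N = μ - 1
    · rw [if_pos h3, if_pos (show ((⟨μ - 1, by omega⟩ : Fin μ) : ℕ) = N by
        show μ - 1 = N; omega)]
    · rw [if_neg h3, if_neg (show ¬ ((⟨μ - 1, by omega⟩ : Fin μ) : ℕ) = N by
        show ¬ (μ - 1 = N); omega)]


section Norms
variable [IsUltrametricDist F] (S : ℝ)

lemma normMul (hS : 1 ≤ S) (A B : Matrix (Fin μ) (Fin μ) F) (a b : ℕ)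
    (hA : ∀ i j : Fin μ, S ^ (i : ℕ) * ‖A i j‖ ≤ S ^ (a + (j : ℕ)))
    (hB : ∀ i j : Fin μ, S ^ (i : ℕ) * ‖B i j‖ ≤ S ^ (b + (j : ℕ))) :
    ∀ i j : Fin μ, S ^ (i : ℕ) * ‖(A * B) i j‖ ≤ S ^ (a + b + (j : ℕ)) := by
  intro i j
  have hS0 : (0 : ℝ) < S := lt_of_lt_of_le one_pos hS
  have hpow : ∀ k : ℕ, (0:ℝ) < S ^ k := fun k => pow_pos hS0 k
  rw [Matrix.mul_apply]
  rw [mul_comm, ← le_div_iff₀ (hpow (i : ℕ))]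
  apply IsUltrametricDist.norm_sum_le_of_forall_le_of_nonneg
  · positivity
  · intro l _
    rw [norm_mul]
    have h1 : ‖A i l‖ ≤ S ^ (a + (l : ℕ)) / S ^ (i : ℕ) := by
      rw [le_div_iff₀ (hpow _), mul_comm]; exact hA i l
    have h2 : ‖B l j‖ ≤ S ^ (b + (j : ℕ)) / S ^ (l : ℕ) := by
      rw [le_div_iff₀ (hpow _), mul_comm]; exact hB l j
    calc ‖A i l‖ * ‖B l j‖
        ≤ (S ^ (a + (l : ℕ)) / S ^ (i : ℕ)) * (S ^ (b + (j : ℕ)) / S ^ (l : ℕ)) := by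
          apply mul_le_mul h1 h2 (norm_nonneg _) (by positivity)
      _ = S ^ (a + b + (j : ℕ)) / S ^ (i : ℕ) := by
          rw [div_mul_div_comm, ← pow_add, ← pow_add,
            div_eq_div_iff (by positivity) (by positivity), ← pow_add, ← pow_add]
          congr 1
          omega

lemma normOne (hS : 1 ≤ S) :
    ∀ i j : Fin μ, S ^ (i : ℕ) * ‖(1 : Matrix (Fin μ) (Fin μ) F) i j‖ ≤ S ^ (0 + (j : ℕ)) := by
  intro i j
  have hS0 : (0 : ℝ) < S := lt_of_lt_of_le one_pos hS
  rw [Matrix.one_apply]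
  by_cases h : i = j
  · rw [if_pos h, norm_one, mul_one, h, zero_add]
  · rw [if_neg h, norm_zero, mul_zero]
    positivity

include hμ hG1 in
lemma normG1 (hS : 1 ≤ S) (hθS : ∀ i : Fin μ, ‖θ i‖ ≤ S ^ (μ - (i : ℕ))) :
    ∀ i j : Fin μ, S ^ (i : ℕ) * ‖G1 i j‖ ≤ S ^ (1 + (j : ℕ)) := by
  intro i j
  have hS0 : (0 : ℝ) < S := lt_of_lt_of_le one_pos hS
  rw [hG1]
  by_cases h1 : (j : ℕ) = μ - 1
  · rw [if_pos h1]
    calc S ^ (i : ℕ) * ‖θ i‖ ≤ S ^ (i : ℕ) * S ^ (μ - (i : ℕ)) := by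
          apply mul_le_mul_of_nonneg_left (hθS i) (by positivity)
      _ = S ^ (1 + (j : ℕ)) := by
          rw [← pow_add]
          congr 1
          omega
  · rw [if_neg h1]
    by_cases h2 : (i : ℕ) = (j : ℕ) + 1
    · rw [if_pos h2, norm_one, mul_one]
      apply pow_le_pow_right₀ hS
      omega
    · rw [if_neg h2, norm_zero, mul_zero]
      positivity

include hμ hG1 in
lemma normG1pow (hS : 1 ≤ S) (hθS : ∀ i : Fin μ, ‖θ i‖ ≤ S ^ (μ - (i : ℕ))) :
    ∀ n, ∀ i j : Fin μ, S ^ (i : ℕ) * ‖(G1 ^ n) i j‖ ≤ S ^ (n + (j : ℕ)) := by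
  intro n
  induction n with
  | zero => exact fun i j => by simpa using normOne (μ := μ) (F := F) S hS i j
  | succ n ih =>
    intro i j
    have := normMul S hS (G1 ^ n) G1 n 1 ih (normG1 hμ θ G1 hG1 S hS hθS) i j
    rw [← pow_succ] at this
    exact this


variable (dd : F → F) (hddnorm : ∀ f : F, ‖dd f‖ ≤ ‖f‖)
variable (G : ℕ → Matrix (Fin μ) (Fin μ) F)
variable (hGone : G 1 = G1)
variable (hGsucc : ∀ n : ℕ, 1 ≤ n → G (n + 1) = G1 * G n + (G n).map dd)

include hμ hG1 hddnorm hGone hGsucc in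
lemma normGn (hS : 1 ≤ S) (hθS : ∀ i : Fin μ, ‖θ i‖ ≤ S ^ (μ - (i : ℕ))) :
    ∀ n, 1 ≤ n → ∀ i j : Fin μ, S ^ (i : ℕ) * ‖G n i j‖ ≤ S ^ (n + (j : ℕ)) := by
  intro n hn
  induction n, hn using Nat.le_induction with
  | base =>
    intro i j
    rw [hGone]
    exact normG1 hμ θ G1 hG1 S hS hθS i j
  | succ n hn ih =>
    intro i j
    have hS0 : (0 : ℝ) < S := lt_of_lt_of_le one_pos hS
    rw [hGsucc n hn, Matrix.add_apply]
    have hadd := IsUltrametricDist.norm_add_le_max ((G1 * G n) i j) ((G n).map dd i j)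
    have h1 : S ^ (i : ℕ) * ‖(G1 * G n) i j‖ ≤ S ^ (n + 1 + (j : ℕ)) := by
      have := normMul S hS G1 (G n) 1 n (normG1 hμ θ G1 hG1 S hS hθS) ih i j
      rw [show 1 + n = n + 1 by ring] at this
      exact this
    have h2 : S ^ (i : ℕ) * ‖(G n).map dd i j‖ ≤ S ^ (n + 1 + (j : ℕ)) := by
      rw [Matrix.map_apply]
      calc S ^ (i : ℕ) * ‖dd (G n i j)‖ ≤ S ^ (i : ℕ) * ‖G n i j‖ := by
            apply mul_le_mul_of_nonneg_left (hddnorm _) (by positivity)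
        _ ≤ S ^ (n + (j : ℕ)) := ih i j
        _ ≤ S ^ (n + 1 + (j : ℕ)) := by
            apply pow_le_pow_right₀ hS
            omega
    calc S ^ (i : ℕ) * ‖(G1 * G n) i j + (G n).map dd i j‖
        ≤ S ^ (i : ℕ) * max ‖(G1 * G n) i j‖ ‖(G n).map dd i j‖ := by
          apply mul_le_mul_of_nonneg_left hadd (by positivity)
      _ ≤ S ^ (n + 1 + (j : ℕ)) := by
          rw [mul_max_of_nonneg _ _ (by positivity : (0:ℝ) ≤ S ^ (i : ℕ))]
          exact max_le h1 h2

include hμ hG1 hddnorm hGone hGsucc in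
lemma normE (hS : 1 ≤ S) (hθS : ∀ i : Fin μ, ‖θ i‖ ≤ S ^ (μ - (i : ℕ))) :
    ∀ n, 1 ≤ n → ∀ i j : Fin μ, S ^ (i : ℕ) * ‖(G1 ^ n - G n) i j‖ ≤ S ^ (n - 1 + (j : ℕ)) := by
  intro n hn
  induction n, hn using Nat.le_induction with
  | base =>
    intro i j
    rw [pow_one, hGone, sub_self]
    have : (0 : Matrix (Fin μ) (Fin μ) F) i j = 0 := rfl
    rw [this, norm_zero, mul_zero]
    have hS0 : (0 : ℝ) < S := lt_of_lt_of_le one_pos hS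
    positivity
  | succ n hn ih =>
    intro i j
    have hS0 : (0 : ℝ) < S := lt_of_lt_of_le one_pos hS
    have hmat : G1 ^ (n + 1) - G (n + 1)
        = G1 * (G1 ^ n - G n) + (-1 : F) • (G n).map dd := by
      rw [hGsucc n hn, pow_succ', mul_sub]
      ext a b
      simp only [Matrix.sub_apply, Matrix.add_apply, Matrix.smul_apply, smul_eq_mul]
      ring
    rw [hmat, Matrix.add_apply]
    have h1 : S ^ (i : ℕ) * ‖(G1 * (G1 ^ n - G n)) i j‖ ≤ S ^ (n + (j : ℕ)) := by
      have := normMul S hS G1 (G1 ^ n - G n) 1 (n - 1)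
        (normG1 hμ θ G1 hG1 S hS hθS) ih i j
      rw [show 1 + (n - 1) = n by omega] at this
      exact this
    have h2 : S ^ (i : ℕ) * ‖((-1 : F) • (G n).map dd) i j‖ ≤ S ^ (n + (j : ℕ)) := by
      rw [Matrix.smul_apply, smul_eq_mul, norm_mul, norm_neg, norm_one, one_mul,
        Matrix.map_apply]
      calc S ^ (i : ℕ) * ‖dd (G n i j)‖ ≤ S ^ (i : ℕ) * ‖G n i j‖ := by
            apply mul_le_mul_of_nonneg_left (hddnorm _) (by positivity)
        _ ≤ S ^ (n + (j : ℕ)) := normGn hμ θ G1 hG1 S dd hddnorm G hGone hGsucc hS hθS n hn i j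
    have hadd := IsUltrametricDist.norm_add_le_max
      ((G1 * (G1 ^ n - G n)) i j) (((-1 : F) • (G n).map dd) i j)
    calc S ^ (i : ℕ) * ‖(G1 * (G1 ^ n - G n)) i j + ((-1 : F) • (G n).map dd) i j‖
        ≤ S ^ (i : ℕ) * max ‖(G1 * (G1 ^ n - G n)) i j‖ ‖((-1 : F) • (G n).map dd) i j‖ := by
          apply mul_le_mul_of_nonneg_left hadd (by positivity)
      _ ≤ S ^ (n + (j : ℕ)) := by
          rw [mul_max_of_nonneg _ _ (by positivity : (0:ℝ) ≤ S ^ (i : ℕ))]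
          exact max_le h1 h2
      _ = S ^ (n + 1 - 1 + (j : ℕ)) := rfl


include hμ hG1 in
lemma low (hS : 1 < S) (hθS : ∀ i : Fin μ, ‖θ i‖ ≤ S ^ (μ - (i : ℕ)))
    (j0 : Fin μ) (hj0 : ‖θ j0‖ = S ^ (μ - (j0 : ℕ)))
    (n : ℕ) (hn : 1 ≤ n)
    (hcon : ∀ i j : Fin μ, S ^ (i : ℕ) * ‖(G1 ^ n) i j‖ ≤ S ^ (n - 1 + (j : ℕ))) :
    False := by
  classical
  have hS1 : (1:ℝ) ≤ S := hS.le
  have hS0 : (0:ℝ) < S := lt_trans one_pos hS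
  set d : ℕ → F := fun m => (G1 ^ m) ⟨μ - 1, by omega⟩ ⟨0, by omega⟩ with hdDef
  -- (a) powers of the contraction
  have hk : ∀ k, ∀ i j : Fin μ,
      S ^ (i:ℕ) * ‖(G1 ^ (n * k)) i j‖ ≤ S ^ ((n-1) * k + (j:ℕ)) := by
    intro k
    induction k with
    | zero => simpa using normOne (μ := μ) (F := F) S hS1
    | succ k ih =>
      intro i j
      have hmul := normMul S hS1 (G1 ^ (n*k)) (G1 ^ n) ((n-1)*k) (n-1) ih hcon i j
      rw [← pow_add, show n * k + n = n * (k+1) by ring,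
        show (n-1) * k + (n-1) + (j:ℕ) = (n-1)*(k+1) + (j:ℕ) by ring] at hmul
      exact hmul
  -- (b) bound on d m
  have hdm : ∀ m : ℕ, ‖d m‖ * S ^ (μ - 1) ≤ S ^ ((n-1) * (m / n) + m % n) := by
    intro m
    have hsplit : G1 ^ m = G1 ^ (n * (m / n)) * G1 ^ (m % n) := by
      rw [← pow_add, Nat.div_add_mod m n]
    have h1 := normMul S hS1 _ _ ((n-1)*(m/n)) (m % n) (hk (m/n))
      (normG1pow hμ θ G1 hG1 S hS1 hθS (m % n)) ⟨μ - 1, by omega⟩ ⟨0, by omega⟩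
    rw [← hsplit] at h1
    calc ‖d m‖ * S ^ (μ - 1)
        = S ^ (((⟨μ - 1, by omega⟩ : Fin μ)) : ℕ) * ‖(G1 ^ m) ⟨μ - 1, by omega⟩ ⟨0, by omega⟩‖ := by
          rw [mul_comm]
      _ ≤ S ^ ((n-1)*(m/n) + m % n + (((⟨0, by omega⟩ : Fin μ)) : ℕ)) := h1
      _ = S ^ ((n-1) * (m / n) + m % n) := rfl
  -- (c) choose t
  set c : ℝ := (2 * (n:ℝ))⁻¹ with hc
  have hn0 : (0:ℝ) < (n:ℝ) := by exact_mod_cast hn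
  have hc0 : 0 < c := by rw [hc]; positivity
  set t : ℝ := S ^ (c - 1) with ht
  have ht0 : 0 < t := Real.rpow_pos_of_pos hS0 _
  have hSt1 : S * t = S ^ c := by
    have h2 := (Real.rpow_add hS0 1 (c - 1)).symm
    rw [Real.rpow_one] at h2
    rw [ht, h2, show (1 + (c - 1)) = c by ring]
  have hSt : 1 < S * t := by
    rw [hSt1]
    exact (Real.one_lt_rpow_iff_of_pos hS0).2 (Or.inl ⟨hS, hc0⟩)
  set e : ℕ → ℝ := fun m => ‖d m‖ * t ^ m with he
  -- geometric bound on e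
  set r0 : ℝ := S ^ (-c) with hr0
  have hr00 : 0 ≤ r0 := (Real.rpow_pos_of_pos hS0 _).le
  have hr01 : r0 < 1 := Real.rpow_lt_one_of_one_lt_of_neg hS (by linarith)
  have hem : ∀ m, e m ≤ S * r0 ^ m := by
    intro m
    have hfloor : (m:ℝ) < (n:ℝ) * ((m / n : ℕ):ℝ) + (n:ℝ) := by
      have h3 : m < n * (m / n) + n := by
        have h4 := Nat.div_add_mod m n
        have h5 : m % n < n := Nat.mod_lt m (by omega)
        omega
      exact_mod_cast h3
    have hXq : ((n-1) * (m/n) + m % n) + m / n = m := by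
      obtain ⟨n', rfl⟩ : ∃ n', n = n' + 1 := ⟨n - 1, by omega⟩
      have h6 : (n' + 1 - 1) * (m/(n'+1)) + m/(n'+1) = (n'+1) * (m/(n'+1)) := by
        rw [Nat.add_sub_cancel, Nat.succ_mul]
      calc ((n'+1-1) * (m/(n'+1)) + m % (n'+1)) + m / (n'+1)
          = ((n'+1-1) * (m/(n'+1)) + m/(n'+1)) + m % (n'+1) := by ring
        _ = (n'+1) * (m/(n'+1)) + m % (n'+1) := by rw [h6]
        _ = m := Nat.div_add_mod m (n'+1)
    have h7 : e m ≤ S ^ ((n-1) * (m/n) + m % n) * t ^ m := by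
      simp only [he]
      apply mul_le_mul_of_nonneg_right _ (by positivity)
      calc ‖d m‖ ≤ ‖d m‖ * S ^ (μ - 1) :=
            le_mul_of_one_le_right (norm_nonneg _) (one_le_pow₀ hS1)
        _ ≤ _ := hdm m
    set X : ℕ := (n-1) * (m/n) + m % n with hX
    have h8 : S ^ X * t ^ m = S ^ ((X:ℝ) + (c-1)*m) := by
      rw [Real.rpow_add hS0, Real.rpow_natCast, ht, ← Real.rpow_natCast (S ^ (c-1)) m,
        ← Real.rpow_mul hS0.le]
    have h9 : (X:ℝ) + (c-1)*m ≤ 1 + (-c) * m := by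
      have h10 : (X:ℝ) = (m:ℝ) - ((m/n : ℕ):ℝ) := by
        have h11 : ((X:ℕ):ℝ) + ((m/n : ℕ):ℝ) = (m:ℝ) := by
          exact_mod_cast congrArg (Nat.cast : ℕ → ℝ) hXq
        linarith
      have h12 : (m:ℝ)/(n:ℝ) - 1 < ((m/n : ℕ):ℝ) := by
        rw [sub_lt_iff_lt_add, div_lt_iff₀ hn0, add_mul, one_mul, mul_comm]
        linarith
      have h2c : 2 * c = (n:ℝ)⁻¹ := by
        rw [hc, mul_inv]
        rw [show ((2:ℝ))⁻¹ = 1/2 by norm_num]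
        field_simp
      have h2cm : 2 * c * (m:ℝ) = (m:ℝ) / (n:ℝ) := by
        rw [div_eq_mul_inv, ← h2c]
        ring
      rw [h10]
      nlinarith [h12, h2cm]
    have h18 : S ^ ((X:ℝ) + (c-1)*m) ≤ S ^ (1 + (-c) * m) :=
      (Real.rpow_le_rpow_left_iff hS).2 h9
    have h19 : S ^ (1 + (-c)*m : ℝ) = S * r0 ^ m := by
      rw [Real.rpow_add hS0, Real.rpow_one, hr0,
        ← Real.rpow_natCast (S ^ (-c)) m, ← Real.rpow_mul hS0.le]
    calc e m ≤ S ^ X * t ^ m := h7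
      _ = S ^ ((X:ℝ) + (c-1)*m) := h8
      _ ≤ S ^ (1 + (-c) * m) := h18
      _ = S * r0 ^ m := h19
  have he0 : Filter.Tendsto e Filter.atTop (nhds 0) := by
    have hgeo : Filter.Tendsto (fun m => S * r0 ^ m) Filter.atTop (nhds (S * 0)) :=
      (tendsto_pow_atTop_nhds_zero_of_lt_one hr00 hr01).const_mul S
    rw [mul_zero] at hgeo
    refine squeeze_zero (fun m => ?_) hem hgeo
    simp only [he]
    positivity
  -- (d) e (μ - 1) = t ^ (μ - 1)
  have hd1 : d (μ - 1) = 1 := by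
    simp only [hdDef]
    rw [pow_apply_low hμ θ G1 hG1 (μ - 1) (by omega)]
    rw [if_pos]
    rfl
  have heμ : e (μ - 1) = t ^ (μ - 1) := by simp only [he]; rw [hd1, norm_one, one_mul]
  -- (e) maximizer of e
  have htμ : 0 < t ^ (μ - 1) := by positivity
  obtain ⟨N, hN⟩ := Filter.eventually_atTop.1 (he0.eventually_lt_const htμ)
  obtain ⟨m0, hm0T, hm0max⟩ := (Finset.range (N + μ)).exists_max_image e
    ⟨0, Finset.mem_range.2 (by omega)⟩
  have hglob : ∃ m, ∀ m', e m' ≤ e m := by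
    refine ⟨m0, fun m' => ?_⟩
    by_cases h : m' < N + μ
    · exact hm0max _ (Finset.mem_range.2 h)
    · calc e m' ≤ t ^ (μ - 1) := (hN m' (by omega)).le
        _ = e (μ - 1) := heμ.symm
        _ ≤ e m0 := hm0max _ (Finset.mem_range.2 (by omega))
  set n0 := Nat.find hglob with hn0Def
  have hmax : ∀ m', e m' ≤ e n0 := Nat.find_spec hglob
  set V : ℝ := e n0 with hV
  have hVlt : ∀ m < n0, e m < V := by
    intro m hm
    rcases lt_or_eq_of_le (hmax m) with h | h
    · exact h
    · exact absurd (fun m' => h ▸ hmax m') (Nat.find_min hglob hm)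
  have hV0 : 0 < V := lt_of_lt_of_le htμ (heμ ▸ hmax (μ - 1))
  have hVe : ∀ m, e m ≤ V := hmax
  -- (f) the weights w
  set p : ℕ → F := fun k => if k = 0 then 1 else
    -(if h : μ - k < μ then θ ⟨μ - k, h⟩ else 0) with hp
  set w : ℕ → ℝ := fun k => ‖p k‖ * t ^ k with hw
  have hexw : ∃ k, k ≤ μ ∧ ∀ k' ≤ μ, w k' ≤ w k := by
    obtain ⟨k1, hk1T, hk1max⟩ := (Finset.range (μ+1)).exists_max_image w
      ⟨0, Finset.mem_range.2 (by omega)⟩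
    rw [Finset.mem_range] at hk1T
    exact ⟨k1, by omega, fun k' hk' => hk1max _ (Finset.mem_range.2 (by omega))⟩
  set k0 := Nat.find hexw with hk0Def
  obtain ⟨hk0μ, hWmax⟩ := Nat.find_spec hexw
  set W : ℝ := w k0 with hW
  have hWlt : ∀ k < k0, w k < W := by
    intro k hk
    rcases lt_or_eq_of_le (hWmax k (by omega)) with h | h
    · exact h
    · exact absurd ⟨by omega, fun k' hk' => h ▸ hWmax k' hk'⟩ (Nat.find_min hexw hk)
  have hwj0 : w (μ - (j0:ℕ)) = (S*t) ^ (μ - (j0:ℕ)) := by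
    have hj0μ : (j0:ℕ) < μ := j0.isLt
    simp only [hw, hp]
    rw [if_neg (by omega : ¬ (μ - (j0:ℕ)) = 0)]
    have e5 : μ - (μ - (j0:ℕ)) = (j0:ℕ) := by omega
    simp only [e5]
    rw [dif_pos hj0μ, norm_neg]
    have e6 : θ ⟨(j0:ℕ), hj0μ⟩ = θ j0 := by congr
    rw [e6, hj0, mul_pow]
  have hW1 : 1 < W := by
    calc (1:ℝ) < (S*t) ^ (μ - (j0:ℕ)) := by
          apply one_lt_pow₀ hSt
          have := j0.isLt
          omega
      _ = w (μ - (j0:ℕ)) := hwj0.symm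
      _ ≤ W := hWmax _ (by omega)
  have hk00 : k0 ≠ 0 := by
    intro h
    have hcontra : W = 1 := by
      rw [hW, h]
      simp only [hw, hp]
      simp
    rw [hcontra] at hW1
    exact lt_irrefl _ hW1
  -- (g) pivot
  set Ns := n0 + k0 with hNsDef
  have hident := pividentity hμ θ G1 hG1 Ns
  have hk0mem : k0 ∈ Finset.range (μ+1) := Finset.mem_range.2 (by omega)
  rw [← Finset.add_sum_erase _ _ hk0mem] at hident
  have hpivshape : (if k0 = 0 then (1:F) else -(if h : μ - k0 < μ then θ ⟨μ - k0, h⟩ else 0)) *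
      (if k0 ≤ Ns then (G1 ^ (Ns - k0)) ⟨μ - 1, by omega⟩ ⟨0, by omega⟩ else 0)
      = p k0 * d n0 := by
    rw [if_pos (by omega : k0 ≤ Ns), show Ns - k0 = n0 by omega]
  rw [hpivshape] at hident
  have hpivn : ‖p k0 * d n0‖ * t ^ Ns = W * V := by
    rw [norm_mul, hNsDef, pow_add, hW, hV]
    simp only [hw, he]
    ring
  have hrest : ∀ k ∈ (Finset.range (μ+1)).erase k0,
      ‖(if k = 0 then (1:F) else -(if h : μ - k < μ then θ ⟨μ - k, h⟩ else 0)) *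
        (if k ≤ Ns then (G1 ^ (Ns - k)) ⟨μ - 1, by omega⟩ ⟨0, by omega⟩ else 0)‖
      < ‖p k0 * d n0‖ := by
    intro k hk
    rw [Finset.mem_erase, Finset.mem_range] at hk
    obtain ⟨hkne, hkμ1⟩ := hk
    have hkμ : k ≤ μ := by omega
    have key : ‖(if k = 0 then (1:F) else -(if h : μ - k < μ then θ ⟨μ - k, h⟩ else 0)) *
        (if k ≤ Ns then (G1 ^ (Ns - k)) ⟨μ - 1, by omega⟩ ⟨0, by omega⟩ else 0)‖ * t ^ Ns
        < W * V := by
      by_cases hkN : k ≤ Ns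
      · rw [if_pos hkN]
        have hterm : ∀ m', k + m' = Ns → ‖p k * d m'‖ * t ^ Ns = w k * e m' := by
          intro m' hm'
          rw [← hm', norm_mul, pow_add]
          simp only [hw, he]
          ring
        have hshape2 : (if k = 0 then (1:F) else -(if h : μ - k < μ then θ ⟨μ - k, h⟩ else 0))
            = p k := rfl
        have hshape3 : (G1 ^ (Ns - k)) ⟨μ - 1, by omega⟩ ⟨0, by omega⟩ = d (Ns - k) := rfl
        rw [hshape2, hshape3, hterm (Ns - k) (by omega)]
        rcases lt_or_gt_of_ne hkne with hlt | hgt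
        · calc w k * e (Ns - k) ≤ w k * V := by
                apply mul_le_mul_of_nonneg_left (hVe _)
                simp only [hw]
                positivity
            _ < W * V := mul_lt_mul_of_pos_right (hWlt k hlt) hV0
        · have hidx : Ns - k < n0 := by omega
          calc w k * e (Ns - k) ≤ W * e (Ns - k) := by
                apply mul_le_mul_of_nonneg_right (hWmax k hkμ)
                simp only [he]
                positivity
            _ < W * V := mul_lt_mul_of_pos_left (hVlt _ hidx) (lt_trans one_pos hW1)
      · rw [if_neg hkN, mul_zero, norm_zero, zero_mul]
        exact mul_pos (lt_trans one_pos hW1) hV0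
    rw [← hpivn] at key
    exact lt_of_mul_lt_mul_right key (pow_nonneg ht0.le Ns)
  have hsumlt : ‖∑ k ∈ (Finset.range (μ+1)).erase k0,
      ((if k = 0 then (1:F) else -(if h : μ - k < μ then θ ⟨μ - k, h⟩ else 0)) *
        (if k ≤ Ns then (G1 ^ (Ns - k)) ⟨μ - 1, by omega⟩ ⟨0, by omega⟩ else 0))‖
      < ‖p k0 * d n0‖ := by
    have hne : ((Finset.range (μ+1)).erase k0).Nonempty :=
      ⟨0, Finset.mem_erase.2 ⟨fun h => hk00 h.symm, Finset.mem_range.2 (by omega)⟩⟩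
    refine lt_of_le_of_lt (hne.norm_sum_le_sup'_norm _) ?_
    rw [Finset.sup'_lt_iff hne]
    intro k hk
    exact hrest k hk
  have heqn : ‖(if Ns = μ-1 then (1:F) else 0)‖ = ‖p k0 * d n0‖ := by
    rw [← hident]
    rw [IsUltrametricDist.norm_add_eq_max_of_norm_ne_norm (ne_of_lt hsumlt).symm]
    exact max_eq_left hsumlt.le
  have hfin : W * V ≤ V := by
    have h1 : ‖(if Ns = μ-1 then (1:F) else 0)‖ * t ^ Ns ≤ V := by
      by_cases hNsc : Ns = μ - 1
      · rw [if_pos hNsc, norm_one, one_mul, hNsc]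
        calc t^(μ-1) = e (μ-1) := heμ.symm
          _ ≤ V := hVe _
      · rw [if_neg hNsc, norm_zero, zero_mul]
        exact hV0.le
    calc W * V = ‖p k0 * d n0‖ * t ^ Ns := hpivn.symm
      _ = ‖(if Ns = μ-1 then (1:F) else 0)‖ * t ^ Ns := by rw [heqn]
      _ ≤ V := h1
  nlinarith [hV0, hW1, hfin]


include hμ hG1 hddnorm hGone hGsucc in
lemma entryBig (hS : 1 < S) (hθS : ∀ i : Fin μ, ‖θ i‖ ≤ S ^ (μ - (i : ℕ)))
    (j0 : Fin μ) (hj0 : ‖θ j0‖ = S ^ (μ - (j0 : ℕ)))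
    (n : ℕ) (hn : 1 ≤ n) :
    ∃ i j : Fin μ, S ^ ((n:ℝ) - (μ:ℝ)) ≤ ‖G n i j‖ := by
  have hS0 : (0:ℝ) < S := lt_trans one_pos hS
  have hnc : ¬ ∀ i j : Fin μ, S ^ (i:ℕ) * ‖(G1 ^ n) i j‖ ≤ S ^ (n - 1 + (j:ℕ)) :=
    fun hcon => low hμ θ G1 hG1 S hS hθS j0 hj0 n hn hcon
  push_neg at hnc
  obtain ⟨i, j, hij⟩ := hnc
  refine ⟨i, j, ?_⟩
  have hE := normE hμ θ G1 hG1 S dd hddnorm G hGone hGsucc hS.le hθS n hn i j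
  have hpow : (0:ℝ) < S ^ (i:ℕ) := pow_pos hS0 _
  have hlt : ‖(G1 ^ n - G n) i j‖ < ‖(G1 ^ n) i j‖ := by
    have h2 := lt_of_le_of_lt hE hij
    exact lt_of_mul_lt_mul_left h2 hpow.le
  have hGn : G n i j = (G1 ^ n) i j + (-((G1 ^ n - G n) i j)) := by
    simp [Matrix.sub_apply]
  have hnormeq : ‖G n i j‖ = ‖(G1 ^ n) i j‖ := by
    rw [hGn]
    rw [IsUltrametricDist.norm_add_eq_max_of_norm_ne_norm
      (by rw [norm_neg]; exact (ne_of_lt hlt).symm)]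
    rw [norm_neg]
    exact max_eq_left hlt.le
  rw [hnormeq]
  have h1 : S ^ (n - 1 + (j:ℕ)) / S ^ (i:ℕ) ≤ ‖(G1 ^ n) i j‖ := by
    rw [div_le_iff₀ hpow, mul_comm]
    exact hij.le
  have h2 : S ^ ((n:ℝ) - (μ:ℝ)) ≤ S ^ (n - 1 + (j:ℕ)) / S ^ (i:ℕ) := by
    rw [le_div_iff₀ hpow, ← Real.rpow_natCast S (i:ℕ),
      ← Real.rpow_natCast S (n - 1 + (j:ℕ)), ← Real.rpow_add hS0]
    apply (Real.rpow_le_rpow_left_iff hS).2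
    rw [Nat.cast_add, Nat.cast_sub hn]
    have hi : ((i:ℕ):ℝ) + 1 ≤ (μ:ℝ) := by exact_mod_cast i.isLt
    have hj : (0:ℝ) ≤ ((j:ℕ):ℝ) := Nat.cast_nonneg _
    push_cast
    linarith
  linarith

end Norms
end Aux

theorem stmt_1 {F : Type*} [NormedField F] [IsUltrametricDist F] [CompleteSpace F]
    (dd : F → F)
    (hddadd : ∀ f g : F, dd (f + g) = dd f + dd g)
    (hddmul : ∀ f g : F, dd (f * g) = f * dd g + g * dd f)
    (hddnorm : ∀ f : F, ‖dd f‖ ≤ ‖f‖)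
    (μ : ℕ) (hμ : 1 ≤ μ) (θ : Fin μ → F)
    (G1 : Matrix (Fin μ) (Fin μ) F)
    (hG1 : ∀ i j : Fin μ, G1 i j =
      if (j : ℕ) = μ - 1 then θ i else if (i : ℕ) = (j : ℕ) + 1 then 1 else 0)
    (G : ℕ → Matrix (Fin μ) (Fin μ) F)
    (hGone : G 1 = G1)
    (hGsucc : ∀ n : ℕ, 1 ≤ n → G (n + 1) = G1 * G n + (G n).map dd) :
    max 1 (Filter.limsup
        (fun n : ℕ => (⨆ p : Fin μ × Fin μ, ‖G n p.1 p.2‖) ^ ((n : ℝ)⁻¹)) Filter.atTop)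
      = max 1 (⨆ j : Fin μ, ‖θ j‖ ^ (((μ : ℝ) - ((j : ℕ) : ℝ))⁻¹)) := by
  classical
  haveI : Nonempty (Fin μ) := ⟨⟨0, by omega⟩⟩
  set S : ℝ := ⨆ j : Fin μ, ‖θ j‖ ^ (((μ : ℝ) - ((j : ℕ) : ℝ))⁻¹) with hSdef
  set u : ℕ → ℝ := fun n => (⨆ p : Fin μ × Fin μ, ‖G n p.1 p.2‖) ^ ((n : ℝ)⁻¹) with hu
  have hfin : ∀ j : Fin μ, ‖θ j‖ ^ (((μ:ℝ) - ((j:ℕ):ℝ))⁻¹) ≤ S := by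
    intro j
    rw [hSdef]
    exact le_ciSup (f := fun j : Fin μ => ‖θ j‖ ^ (((μ:ℝ) - ((j:ℕ):ℝ))⁻¹))
      (Set.Finite.bddAbove (Set.finite_range _)) j
  obtain ⟨j0, _, hj0max⟩ := Finset.exists_max_image Finset.univ
    (fun j : Fin μ => ‖θ j‖ ^ (((μ:ℝ) - ((j:ℕ):ℝ))⁻¹)) ⟨⟨0, by omega⟩, Finset.mem_univ _⟩
  have hSeq : S = ‖θ j0‖ ^ (((μ:ℝ) - ((j0:ℕ):ℝ))⁻¹) := by
    refine le_antisymm ?_ (hfin j0)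
    rw [hSdef]
    exact ciSup_le (fun j => hj0max j (Finset.mem_univ j))
  have hcj : ∀ j : Fin μ, (0:ℝ) < (μ:ℝ) - ((j:ℕ):ℝ) := by
    intro j
    have := j.isLt
    have h2 : ((j:ℕ):ℝ) < (μ:ℝ) := by exact_mod_cast this
    linarith
  have hS0 : 0 ≤ S := hSeq ▸ Real.rpow_nonneg (norm_nonneg _) _
  have hθpow : ∀ r : ℝ, 1 ≤ r → S ≤ r → ∀ j : Fin μ, ‖θ j‖ ≤ r ^ (μ - (j:ℕ)) := by
    intro r hr hSr j
    have h1 : ((μ - (j:ℕ) : ℕ) : ℝ) = (μ:ℝ) - ((j:ℕ):ℝ) := by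
      rw [Nat.cast_sub j.isLt.le]
    calc ‖θ j‖ = (‖θ j‖ ^ (((μ:ℝ) - ((j:ℕ):ℝ))⁻¹)) ^ ((μ:ℝ) - ((j:ℕ):ℝ)) :=
          (Real.rpow_inv_rpow (norm_nonneg _) (ne_of_gt (hcj j))).symm
      _ ≤ r ^ ((μ:ℝ) - ((j:ℕ):ℝ)) :=
          Real.rpow_le_rpow (Real.rpow_nonneg (norm_nonneg _) _)
            (le_trans (hfin j) hSr) (hcj j).le
      _ = r ^ ((μ - (j:ℕ) : ℕ) : ℝ) := by rw [h1]
      _ = r ^ (μ - (j:ℕ)) := Real.rpow_natCast r _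
  -- nonneg of sup norms
  have hsupnn : ∀ n : ℕ, 0 ≤ ⨆ p : Fin μ × Fin μ, ‖G n p.1 p.2‖ := by
    intro n
    exact Real.iSup_nonneg fun p => norm_nonneg _
  have hunn : ∀ n, 0 ≤ u n := fun n => Real.rpow_nonneg (hsupnn n) _
  have hcoU : Filter.IsCoboundedUnder (· ≤ ·) Filter.atTop u :=
    Filter.IsBoundedUnder.isCoboundedUnder_le
      ⟨0, Filter.eventually_map.2 (Filter.Eventually.of_forall hunn)⟩
  by_cases hS1 : S ≤ 1
  · -- bounded case
    have hθ1 : ∀ j : Fin μ, ‖θ j‖ ≤ (1:ℝ) ^ (μ - (j:ℕ)) := hθpow 1 le_rfl hS1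
    have hub : ∀ n, 1 ≤ n → u n ≤ 1 := by
      intro n hn
      have hb : (⨆ p : Fin μ × Fin μ, ‖G n p.1 p.2‖) ≤ 1 := by
        apply ciSup_le
        intro p
        have := normGn hμ θ G1 hG1 1 dd hddnorm G hGone hGsucc le_rfl hθ1 n hn p.1 p.2
        simpa using this
      exact Real.rpow_le_one (hsupnn n) hb (by positivity)
    have hlim : Filter.limsup u Filter.atTop ≤ 1 := by
      apply Filter.limsup_le_of_le hcoU
      exact Filter.eventually_atTop.2 ⟨1, hub⟩
    rw [max_eq_left hS1, max_eq_left hlim]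
  · push_neg at hS1
    have hθS := hθpow S hS1.le le_rfl
    have hSpos : (0:ℝ) < S := lt_trans one_pos hS1
    have hj0 : ‖θ j0‖ = S ^ (μ - (j0:ℕ)) := by
      have h1 : ((μ - (j0:ℕ) : ℕ) : ℝ) = (μ:ℝ) - ((j0:ℕ):ℝ) := by
        rw [Nat.cast_sub j0.isLt.le]
      rw [hSeq, ← Real.rpow_natCast (‖θ j0‖ ^ (((μ:ℝ) - ((j0:ℕ):ℝ))⁻¹)) (μ - (j0:ℕ)), h1,
        Real.rpow_inv_rpow (norm_nonneg _) (ne_of_gt (hcj j0))]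
    -- upper bound sequence
    have hubU : ∀ n : ℕ, 1 ≤ n → u n ≤ S ^ (1 + (μ:ℝ)/(n:ℝ)) := by
      intro n hn
      have hn0 : (0:ℝ) < (n:ℝ) := by exact_mod_cast hn
      have hb : (⨆ p : Fin μ × Fin μ, ‖G n p.1 p.2‖) ≤ S ^ (n + μ) := by
        apply ciSup_le
        intro p
        have h2 := normGn hμ θ G1 hG1 S dd hddnorm G hGone hGsucc hS1.le hθS n hn p.1 p.2
        have h3 : ‖G n p.1 p.2‖ ≤ S ^ (n + (p.2:ℕ)) := by
          calc ‖G n p.1 p.2‖ ≤ S ^ ((p.1:ℕ)) * ‖G n p.1 p.2‖ :=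
                le_mul_of_one_le_left (norm_nonneg _) (one_le_pow₀ hS1.le)
            _ ≤ S ^ (n + (p.2:ℕ)) := h2
        calc ‖G n p.1 p.2‖ ≤ S ^ (n + (p.2:ℕ)) := h3
          _ ≤ S ^ (n + μ) := pow_le_pow_right₀ hS1.le (by have := p.2.isLt; omega)
      calc u n ≤ (S ^ (n + μ)) ^ ((n:ℝ)⁻¹) :=
            Real.rpow_le_rpow (hsupnn n) hb (by positivity)
        _ = S ^ (((n + μ : ℕ):ℝ) * (n:ℝ)⁻¹) := by
            rw [← Real.rpow_natCast S (n + μ), ← Real.rpow_mul hSpos.le]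
        _ = S ^ (1 + (μ:ℝ)/(n:ℝ)) := by
            congr 1
            push_cast
            field_simp
      -- done
    have hlbL : ∀ n : ℕ, 1 ≤ n → S ^ (1 - (μ:ℝ)/(n:ℝ)) ≤ u n := by
      intro n hn
      have hn0 : (0:ℝ) < (n:ℝ) := by exact_mod_cast hn
      obtain ⟨i, j, hij⟩ := entryBig hμ θ G1 hG1 S dd hddnorm G hGone hGsucc hS1 hθS j0 hj0 n hn
      have hb : S ^ ((n:ℝ) - (μ:ℝ)) ≤ ⨆ p : Fin μ × Fin μ, ‖G n p.1 p.2‖ :=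
        le_trans hij (le_ciSup (f := fun p : Fin μ × Fin μ => ‖G n p.1 p.2‖)
          (Set.Finite.bddAbove (Set.finite_range _)) (⟨i, j⟩ : Fin μ × Fin μ))
      calc S ^ (1 - (μ:ℝ)/(n:ℝ)) = (S ^ ((n:ℝ) - (μ:ℝ))) ^ ((n:ℝ)⁻¹) := by
            rw [← Real.rpow_mul hSpos.le]
            congr 1
            field_simp
        _ ≤ u n := Real.rpow_le_rpow (Real.rpow_nonneg hSpos.le _) hb (by positivity)
    -- limits
    have hμn : Filter.Tendsto (fun n : ℕ => (μ:ℝ)/(n:ℝ)) Filter.atTop (nhds 0) :=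
      tendsto_const_div_atTop_nhds_zero_nat (μ:ℝ)
    have hvU : Filter.Tendsto (fun n : ℕ => S ^ (1 + (μ:ℝ)/(n:ℝ))) Filter.atTop (nhds S) := by
      have h2 : Filter.Tendsto (fun n : ℕ => 1 + (μ:ℝ)/(n:ℝ)) Filter.atTop (nhds (1 + 0)) :=
        tendsto_const_nhds.add hμn
      rw [add_zero] at h2
      have h3 := Filter.Tendsto.rpow (tendsto_const_nhds : Filter.Tendsto _ Filter.atTop (nhds S))
        h2 (Or.inl (ne_of_gt hSpos))
      rw [Real.rpow_one] at h3
      exact h3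
    have hvL : Filter.Tendsto (fun n : ℕ => S ^ (1 - (μ:ℝ)/(n:ℝ))) Filter.atTop (nhds S) := by
      have h2 : Filter.Tendsto (fun n : ℕ => 1 - (μ:ℝ)/(n:ℝ)) Filter.atTop (nhds (1 - 0)) :=
        tendsto_const_nhds.sub hμn
      rw [sub_zero] at h2
      have h3 := Filter.Tendsto.rpow (tendsto_const_nhds : Filter.Tendsto _ Filter.atTop (nhds S))
        h2 (Or.inl (ne_of_gt hSpos))
      rw [Real.rpow_one] at h3
      exact h3
    have hbU : Filter.IsBoundedUnder (· ≤ ·) Filter.atTop u := by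
      refine ⟨S ^ ((1:ℝ) + (μ:ℝ)), Filter.eventually_map.2 ?_⟩
      rw [Filter.eventually_atTop]
      refine ⟨1, fun n hn => ?_⟩
      have hn0 : (0:ℝ) < (n:ℝ) := by exact_mod_cast hn
      calc u n ≤ S ^ (1 + (μ:ℝ)/(n:ℝ)) := hubU n hn
        _ ≤ S ^ ((1:ℝ) + (μ:ℝ)) := by
            apply (Real.rpow_le_rpow_left_iff hS1).2
            have : (μ:ℝ)/(n:ℝ) ≤ (μ:ℝ) := by
              apply div_le_self (Nat.cast_nonneg μ)
              exact_mod_cast hn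
            linarith
    have hle : Filter.limsup u Filter.atTop ≤ S := by
      calc Filter.limsup u Filter.atTop
          ≤ Filter.limsup (fun n : ℕ => S ^ (1 + (μ:ℝ)/(n:ℝ))) Filter.atTop := by
            apply Filter.limsup_le_limsup _ hcoU (hvU.isBoundedUnder_le)
            rw [Filter.EventuallyLE, Filter.eventually_atTop]
            exact ⟨1, hubU⟩
        _ = S := hvU.limsup_eq
    have hge : S ≤ Filter.limsup u Filter.atTop := by
      calc S = Filter.limsup (fun n : ℕ => S ^ (1 - (μ:ℝ)/(n:ℝ))) Filter.atTop := hvL.limsup_eq.symm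
        _ ≤ Filter.limsup u Filter.atTop := by
            apply Filter.limsup_le_limsup _ (hvL.isCoboundedUnder_le) hbU
            rw [Filter.EventuallyLE, Filter.eventually_atTop]
            exact ⟨1, hlbL⟩
    rw [le_antisymm hle hge]
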